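/- arXiv:2509.03886 — 4 statements merged into one kernel-verified Lean document; each statement's English description precedes it below -/
import Mathlib

section
/- Let B, E ∈ ℝ³ and let F = [[B̃, −iE],[iEᵀ, 0]] and F̂ = [[Ẽ, iB],[−iBᵀ, 0]] be the associated 4×4 complex matrices, with r₂ = −EᵀB. Then F·F̂ = r₂·I₄ and F̂·F = r₂·I₄, where I₄ is the 4×4 identity matrix. -/
open Matrix

/-- The 4×4 complex field matrix `F = [[B̃, −iE],[iEᵀ, 0]]`, where `B̃α = α × B`. -/
noncomputable def Fmat (B E : Fin 3 → ℝ) : Matrix (Fin 4) (Fin 4) ℂ :=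
  !![0, (B 2 : ℂ), -(B 1 : ℂ), -Complex.I * (E 0 : ℂ);
     -(B 2 : ℂ), 0, (B 0 : ℂ), -Complex.I * (E 1 : ℂ);
     (B 1 : ℂ), -(B 0 : ℂ), 0, -Complex.I * (E 2 : ℂ);
     Complex.I * (E 0 : ℂ), Complex.I * (E 1 : ℂ), Complex.I * (E 2 : ℂ), 0]

/-- The 4×4 complex matrix `F̂ = [[Ẽ, iB],[−iBᵀ, 0]]`, where `Ẽα = α × E`. -/
noncomputable def Fhat (B E : Fin 3 → ℝ) : Matrix (Fin 4) (Fin 4) ℂ :=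
  !![0, (E 2 : ℂ), -(E 1 : ℂ), Complex.I * (B 0 : ℂ);
     -(E 2 : ℂ), 0, (E 0 : ℂ), Complex.I * (B 1 : ℂ);
     (E 1 : ℂ), -(E 0 : ℂ), 0, Complex.I * (B 2 : ℂ);
     -Complex.I * (B 0 : ℂ), -Complex.I * (B 1 : ℂ), -Complex.I * (B 2 : ℂ), 0]


theorem F_mul_Fhat (B E : Fin 3 → ℝ) (r₂ : ℝ) (hr₂ : r₂ = -(E ⬝ᵥ B)) :
    Fmat B E * Fhat B E = (r₂ : ℂ) • (1 : Matrix (Fin 4) (Fin 4) ℂ) ∧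
      Fhat B E * Fmat B E = (r₂ : ℂ) • (1 : Matrix (Fin 4) (Fin 4) ℂ) := by
  subst hr₂
  constructor <;>
  · unfold Fmat Fhat
    ext i j
    fin_cases i <;> fin_cases j <;>
      simp [Matrix.mul_apply, Fin.sum_univ_succ, Matrix.one_apply, dotProduct,
        Fin.sum_univ_three, Complex.ext_iff] <;> ring
end

section
/- Let B, E ∈ ℝ³ with r₁ = EᵀE − BᵀB and r₂ = −EᵀB, and let F be the associated 4×4 complex matrix. Define real sequences by a₂ = 0, b₂ = 1, and for k ≥ 1: a_{2k+2} = r₂²·b_{2k}, b_{2k+2} = a_{2k} + r₁·b_{2k}. Then for every k ≥ 1, the even matrix power satisfies F^{2k} = a_{2k}·I₄ + b_{2k}·F². -/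
open Matrix

/-- Explicit form of `F²`. -/
noncomputable def Gmat (B E : Fin 3 → ℝ) : Matrix (Fin 4) (Fin 4) ℂ :=
  !![-(B 1:ℂ)*B 1 - B 2*B 2 + E 0*E 0, (B 0:ℂ)*B 1 + E 0*E 1,
       (B 0:ℂ)*B 2 + E 0*E 2, Complex.I*(B 1*E 2 - B 2*E 1);
     (B 0:ℂ)*B 1 + E 0*E 1, -(B 0:ℂ)*B 0 - B 2*B 2 + E 1*E 1,
       (B 1:ℂ)*B 2 + E 1*E 2, Complex.I*(B 2*E 0 - B 0*E 2);
     (B 0:ℂ)*B 2 + E 0*E 2, (B 1:ℂ)*B 2 + E 1*E 2,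
       -(B 0:ℂ)*B 0 - B 1*B 1 + E 2*E 2, Complex.I*(B 0*E 1 - B 1*E 0);
     Complex.I*(B 1*E 2 - B 2*E 1), Complex.I*(B 2*E 0 - B 0*E 2),
       Complex.I*(B 0*E 1 - B 1*E 0), (E 0:ℂ)*E 0 + E 1*E 1 + E 2*E 2]

set_option maxHeartbeats 1000000 in
lemma F2_eq (B E : Fin 3 → ℝ) : Fmat B E ^ 2 = Gmat B E := by
  rw [sq]
  ext i j
  fin_cases i <;> fin_cases j <;>
    simp [Fmat, Gmat, Matrix.mul_apply, Fin.sum_univ_four] <;>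
    ring_nf <;> simp [Complex.I_sq] <;> ring_nf

set_option maxHeartbeats 1000000 in
lemma F4_eq (B E : Fin 3 → ℝ) (r₁ r₂ : ℝ)
    (hr₁ : r₁ = E ⬝ᵥ E - B ⬝ᵥ B) (hr₂ : r₂ = -(E ⬝ᵥ B)) :
    Fmat B E ^ 4 = ((r₂ : ℂ) ^ 2) • (1 : Matrix (Fin 4) (Fin 4) ℂ) +
      (r₁ : ℂ) • Fmat B E ^ 2 := by
  have h4 : Fmat B E ^ 4 = Fmat B E ^ 2 * Fmat B E ^ 2 := by
    rw [← pow_add]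
  rw [h4, F2_eq]
  subst hr₁ hr₂
  ext i j
  fin_cases i <;> fin_cases j <;>
    simp [Gmat, Matrix.mul_apply, Fin.sum_univ_four, Matrix.one_apply,
      dotProduct, Fin.sum_univ_three] <;>
    push_cast <;> ring_nf <;> simp [Complex.I_sq] <;> ring_nf

/-- Even powers of `F`: `F^{2k} = a_{2k} I + b_{2k} F²`. -/
theorem even_powers_F (B E : Fin 3 → ℝ) (r₁ r₂ : ℝ)
    (hr₁ : r₁ = E ⬝ᵥ E - B ⬝ᵥ B) (hr₂ : r₂ = -(E ⬝ᵥ B))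
    (a b : ℕ → ℝ) (ha2 : a 2 = 0) (hb2 : b 2 = 1)
    (ha : ∀ k, 1 ≤ k → a (2 * k + 2) = r₂ ^ 2 * b (2 * k))
    (hb : ∀ k, 1 ≤ k → b (2 * k + 2) = a (2 * k) + r₁ * b (2 * k)) :
    ∀ k, 1 ≤ k →
      Fmat B E ^ (2 * k) =
        (a (2 * k) : ℂ) • (1 : Matrix (Fin 4) (Fin 4) ℂ) +
          (b (2 * k) : ℂ) • Fmat B E ^ 2 := by
  have hF4 := F4_eq B E r₁ r₂ hr₁ hr₂
  intro k hk
  induction k with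
  | zero => omega
  | succ n ih =>
    rcases Nat.eq_or_lt_of_le hk with h | h
    · simp [← h, ha2, hb2]
    · have hn : 1 ≤ n := by omega
      have step : Fmat B E ^ (2 * (n + 1)) = Fmat B E ^ (2 * n) * Fmat B E ^ 2 := by
        rw [← pow_add]; ring_nf
      have e : 2 * (n + 1) = 2 * n + 2 := by ring
      rw [step, ih hn, e, ha n hn, hb n hn]
      have h22 : Fmat B E ^ 2 * Fmat B E ^ 2 = Fmat B E ^ 4 := by rw [← pow_add]
      rw [add_mul, smul_mul_assoc, smul_mul_assoc, one_mul, h22, hF4]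
      push_cast
      module
end

section
/- (Total-derivative lemma for quadratic potentials.) Let n ≥ 1, let Q be a symmetric n×n real matrix, let l ≥ 0 be an integer, and let x : ℝ → ℝⁿ be (2l+1)-times continuously differentiable. Define G(t) = Σ_{j=0}^{l−1} (−1)^j · x^{(j)}(t)ᵀ Q x^{(2l−j)}(t) + (−1)^l · (1/2) · x^{(l)}(t)ᵀ Q x^{(l)}(t), where x^{(j)} denotes the j-th derivative. Then G is differentiable and G′(t) = x(t)ᵀ Q x^{(2l+1)}(t) for all t ∈ ℝ; i.e. x(t)ᵀ Q x^{(2l+1)}(t) is a total derivative. -/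
open Matrix

private lemma hasDerivAt_qform {n : ℕ} (Q : Matrix (Fin n) (Fin n) ℝ)
    {f g : ℝ → Fin n → ℝ} {f' g' : Fin n → ℝ} {t : ℝ}
    (hf : HasDerivAt f f' t) (hg : HasDerivAt g g' t) :
    HasDerivAt (fun s => f s ⬝ᵥ (Q *ᵥ g s))
      (f' ⬝ᵥ (Q *ᵥ g t) + f t ⬝ᵥ (Q *ᵥ g')) t := by
  have hfi := hasDerivAt_pi.1 hf
  have hgi := hasDerivAt_pi.1 hg
  have key : HasDerivAt (fun s => ∑ i, ∑ k, f s i * (Q i k * g s k))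
      (∑ i, ∑ k, (f' i * (Q i k * g t k) + f t i * (Q i k * g' k))) t := by
    refine HasDerivAt.fun_sum fun i _ => HasDerivAt.fun_sum fun k _ => ?_
    exact (hfi i).mul ((hgi k).const_mul (Q i k))
  have e1 : (fun s => f s ⬝ᵥ (Q *ᵥ g s)) = fun s => ∑ i, ∑ k, f s i * (Q i k * g s k) := by
    funext s
    simp [dotProduct, Matrix.mulVec, Finset.mul_sum]
  have e2 : f' ⬝ᵥ (Q *ᵥ g t) + f t ⬝ᵥ (Q *ᵥ g')
      = ∑ i, ∑ k, (f' i * (Q i k * g t k) + f t i * (Q i k * g' k)) := by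
    simp [dotProduct, Matrix.mulVec, Finset.mul_sum, Finset.sum_add_distrib]
  rw [e1, e2]
  exact key

/-- Total-derivative lemma for quadratic potentials: for symmetric `Q`,
`xᵀQx^{(2l+1)}` is the derivative of
`Σ_{j<l} (−1)^j x^{(j)ᵀ}Qx^{(2l−j)} + (−1)^l (1/2) x^{(l)ᵀ}Qx^{(l)}`. -/
theorem quadratic_total_derivative (n : ℕ) (hn : 1 ≤ n)
    (Q : Matrix (Fin n) (Fin n) ℝ) (hQ : Q.IsSymm) (l : ℕ)
    (x : ℝ → (Fin n → ℝ)) (hx : ContDiff ℝ (2 * l + 1 : ℕ) x)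
    (G : ℝ → ℝ)
    (hG : ∀ t, G t =
      (∑ j ∈ Finset.range l, (-1 : ℝ) ^ j *
        (iteratedDeriv j x t ⬝ᵥ (Q *ᵥ iteratedDeriv (2 * l - j) x t))) +
      (-1 : ℝ) ^ l * (1 / 2) *
        (iteratedDeriv l x t ⬝ᵥ (Q *ᵥ iteratedDeriv l x t))) :
    ∀ t, HasDerivAt G (x t ⬝ᵥ (Q *ᵥ iteratedDeriv (2 * l + 1) x t)) t := by
  intro t
  -- derivative of iterated derivatives
  have hd : ∀ m : ℕ, m < 2 * l + 1 →
      HasDerivAt (iteratedDeriv m x) (iteratedDeriv (m + 1) x t) t := by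
    intro m hm
    have h1 : Differentiable ℝ (iteratedDeriv m x) :=
      hx.differentiable_iteratedDeriv m (by exact_mod_cast hm)
    have h2 := (h1 t).hasDerivAt
    rwa [show iteratedDeriv (m + 1) x = deriv (iteratedDeriv m x) from iteratedDeriv_succ]
  -- symmetry of the quadratic form
  have hsym : ∀ a b : Fin n → ℝ, a ⬝ᵥ (Q *ᵥ b) = b ⬝ᵥ (Q *ᵥ a) := by
    intro a b
    rw [Matrix.dotProduct_mulVec, ← Matrix.mulVec_transpose, hQ.eq, dotProduct_comm]
  -- the telescoping quantity
  set F : ℕ → ℝ := fun j =>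
    (-1 : ℝ) ^ j * (iteratedDeriv j x t ⬝ᵥ (Q *ᵥ iteratedDeriv (2 * l + 1 - j) x t)) with hF
  have hGfun : G = fun s =>
      (∑ j ∈ Finset.range l, (-1 : ℝ) ^ j *
        (iteratedDeriv j x s ⬝ᵥ (Q *ᵥ iteratedDeriv (2 * l - j) x s))) +
      (-1 : ℝ) ^ l * (1 / 2) *
        (iteratedDeriv l x s ⬝ᵥ (Q *ᵥ iteratedDeriv l x s)) := funext hG
  rw [hGfun]
  have hsum : HasDerivAt (fun s =>
      ∑ j ∈ Finset.range l, (-1 : ℝ) ^ j *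
        (iteratedDeriv j x s ⬝ᵥ (Q *ᵥ iteratedDeriv (2 * l - j) x s)))
      (∑ j ∈ Finset.range l, (F j - F (j + 1))) t := by
    refine HasDerivAt.fun_sum fun j hj => ?_
    have hjl : j < l := Finset.mem_range.1 hj
    have hj1 : j < 2 * l + 1 := by omega
    have hj2 : 2 * l - j < 2 * l + 1 := by omega
    have hterm := (hasDerivAt_qform Q (hd j hj1) (hd (2 * l - j) hj2)).const_mul ((-1:ℝ)^j)
    convert hterm using 1
    · rfl
    have e1 : 2 * l - j + 1 = 2 * l + 1 - j := by omega
    have e2 : 2 * l + 1 - (j + 1) = 2 * l - j := by omega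
    rw [hF]
    simp only [e1, e2]
    ring
  have hhalf : HasDerivAt (fun s =>
      (-1 : ℝ) ^ l * (1 / 2) * (iteratedDeriv l x s ⬝ᵥ (Q *ᵥ iteratedDeriv l x s)))
      (F l) t := by
    have hl1 : l < 2 * l + 1 := by omega
    have hterm := (hasDerivAt_qform Q (hd l hl1) (hd l hl1)).const_mul ((-1:ℝ)^l * (1/2))
    convert hterm using 1
    · rfl
    · rfl
    have e : 2 * l + 1 - l = l + 1 := by omega
    simp only [hF, e, hsym (iteratedDeriv (l+1) x t) (iteratedDeriv l x t)]
    ring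
  have := hsum.add hhalf
  convert this using 1
  · rfl
  · rfl
  · rfl
  rw [Finset.sum_range_sub' F l]
  have e0 : F 0 = x t ⬝ᵥ (Q *ᵥ iteratedDeriv (2 * l + 1) x t) := by
    simp [hF, iteratedDeriv_zero]
  rw [e0]
  ring
end

section
/- (Total-derivative lemma for odd-sum derivative products.) Let n ≥ 1, let k ≥ 0 and m ≥ 0 be integers, set l = k + 2m + 1, and let f : ℝ → ℝⁿ be l-times continuously differentiable. Define G(t) = Σ_{j=0}^{m−1} (−1)^j · f^{(k+j)}(t) · f^{(l−1−j)}(t) + (−1)^m · (1/2) · f^{(k+m)}(t) · f^{(k+m)}(t), where · is the Euclidean inner product and f^{(j)} the j-th derivative. Then G is differentiable and G′(t) = f^{(k)}(t) · f^{(l)}(t) for all t ∈ ℝ; i.e. whenever k + l is odd, the scalar product f^{(k)}·f^{(l)} is a total derivative. -/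
open Matrix

lemma dot_hasDerivAt' {n : ℕ} {g h : ℝ → (Fin n → ℝ)} {g' h' : Fin n → ℝ} {t : ℝ}
    (hg : HasDerivAt g g' t) (hh : HasDerivAt h h' t) :
    HasDerivAt (fun s => g s ⬝ᵥ h s) (g' ⬝ᵥ h t + g t ⬝ᵥ h') t := by
  have : HasDerivAt (fun s => ∑ i, g s i * h s i)
      (∑ i : Fin n, (g' i * h t i + g t i * h' i)) t :=
    HasDerivAt.fun_sum fun i _ => (hasDerivAt_pi.mp hg i).mul (hasDerivAt_pi.mp hh i)
  simpa [dotProduct, Finset.sum_add_distrib] using this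

/-- Total-derivative lemma for odd-sum derivative products: with
`l = k + 2m + 1`, the scalar product `f^{(k)}·f^{(l)}` is the derivative of
`Σ_{j<m} (−1)^j f^{(k+j)}·f^{(l−1−j)} + (−1)^m (1/2) f^{(k+m)}·f^{(k+m)}`. -/
theorem odd_sum_total_derivative (n : ℕ) (hn : 1 ≤ n) (k m l : ℕ)
    (hl : l = k + 2 * m + 1)
    (f : ℝ → (Fin n → ℝ)) (hf : ContDiff ℝ (l : ℕ) f)
    (G : ℝ → ℝ)
    (hG : ∀ t, G t =
      (∑ j ∈ Finset.range m, (-1 : ℝ) ^ j *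
        (iteratedDeriv (k + j) f t ⬝ᵥ iteratedDeriv (l - 1 - j) f t)) +
      (-1 : ℝ) ^ m * (1 / 2) *
        (iteratedDeriv (k + m) f t ⬝ᵥ iteratedDeriv (k + m) f t)) :
    ∀ t, HasDerivAt G (iteratedDeriv k f t ⬝ᵥ iteratedDeriv l f t) t := by
  intro t
  set D : ℕ → ℝ → (Fin n → ℝ) := fun i => iteratedDeriv i f with hD
  have hd : ∀ i, i < l → ∀ s, HasDerivAt (D i) (D (i+1) s) s := by
    intro i hi s
    have hdiff : Differentiable ℝ (iteratedDeriv i f) :=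
      hf.differentiable_iteratedDeriv i (by exact_mod_cast hi)
    have := (hdiff s).hasDerivAt
    simpa [hD, iteratedDeriv_succ] using this
  -- derivative of each summand
  have hsum : HasDerivAt
      (fun s => ∑ j ∈ Finset.range m, (-1 : ℝ) ^ j * (D (k+j) s ⬝ᵥ D (l-1-j) s))
      (∑ j ∈ Finset.range m, (-1 : ℝ) ^ j *
        (D (k+j+1) t ⬝ᵥ D (l-1-j) t + D (k+j) t ⬝ᵥ D (l-j) t)) t := by
    apply HasDerivAt.fun_sum
    intro j hj
    have hjm : j < m := Finset.mem_range.mp hj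
    have h1 : k + j < l := by omega
    have h2 : l - 1 - j < l := by omega
    have h3 : l - 1 - j + 1 = l - j := by omega
    have := dot_hasDerivAt' (hd (k+j) h1 t) (hd (l-1-j) h2 t)
    rw [h3] at this
    exact this.const_mul _
  have hlast : HasDerivAt
      (fun s => (-1 : ℝ) ^ m * (1 / 2) * (D (k+m) s ⬝ᵥ D (k+m) s))
      ((-1 : ℝ) ^ m * (1 / 2) *
        (D (k+m+1) t ⬝ᵥ D (k+m) t + D (k+m) t ⬝ᵥ D (k+m+1) t)) t := by
    have h1 : k + m < l := by omega
    exact (dot_hasDerivAt' (hd (k+m) h1 t) (hd (k+m) h1 t)).const_mul _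
  have hF := hsum.add hlast
  have hGF : G = fun s =>
      (∑ j ∈ Finset.range m, (-1 : ℝ) ^ j * (D (k+j) s ⬝ᵥ D (l-1-j) s)) +
      (-1 : ℝ) ^ m * (1 / 2) * (D (k+m) s ⬝ᵥ D (k+m) s) := funext hG
  rw [hGF]
  convert hF using 1
  case e'_4 => rfl
  case e'_5 => rfl
  case e'_8 => rfl
  -- algebra: telescoping
  set S : ℕ → ℝ := fun j => (-1 : ℝ) ^ j * (D (k+j) t ⬝ᵥ D (l-j) t) with hS
  have key : ∀ j ∈ Finset.range m,
      (-1 : ℝ) ^ j * (D (k+j+1) t ⬝ᵥ D (l-1-j) t + D (k+j) t ⬝ᵥ D (l-j) t)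
      = S j - S (j+1) := by
    intro j hj
    have hjm : j < m := Finset.mem_range.mp hj
    have h3 : l - (j+1) = l - 1 - j := by omega
    simp only [hS, h3, pow_succ]
    ring
  rw [Finset.sum_congr rfl key, Finset.sum_range_sub']
  have hS0 : S 0 = D k t ⬝ᵥ D l t := by simp [hS]
  have hlm : l - m = k + m + 1 := by omega
  have hSm : S m = (-1 : ℝ) ^ m * (D (k+m) t ⬝ᵥ D (k+m+1) t) := by
    simp [hS, hlm]
  rw [hS0, hSm, dotProduct_comm (D (k+m+1) t)]
  ring
end
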